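/- arXiv:2007.11929 — 4 statements merged into one kernel-verified Lean document; each statement's English description precedes it below -/
import Mathlib

section
/- Let n ≥ 1, let A ∈ Matrix (Fin n) (Fin n) ℝ be traceless, let (i_1,j_1),…,(i_{m_1},j_{m_1}) be pairs in Fin n with i_k ≠ j_k, and let (i_{m_1+1},j_{m_1+1}),…,(i_{m_2},j_{m_2}) be further pairs with i_k ≠ j_k. Let G_contr be the digraph on Fin n whose arcs are exactly (i_1,j_1),…,(i_{m_1},j_{m_1}), and let G_drift be the digraph with an arc (i,j) exactly when i ≠ j and A i j ≠ 0. Suppose: (a) within each weakly connected component of G_contr every vertex is reachable from every other by a directed path in G_contr (i.e., whenever v is weakly connected to u, v is reachable from u); (b) every weakly connected component of G_contr contains at least two vertices; and (c) some weakly connected component of G_contr contains at least three vertices. Then the Lie subalgebra of Matrix (Fin n) (Fin n) ℝ generated by {A} ∪ {E i_1 j_1, …, E i_{m_1} j_{m_1}} ∪ {C i_{m_1+1} j_{m_1+1}, …, C i_{m_2} j_{m_2}} equals sl(n,ℝ) if and only if the union digraph G_drift ∪ G_contr (arcs are the union of the two arc sets) is strongly connected. (This is the Lie algebra rank condition characterizing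 accessibility of the bilinear system with drift A on SL(n).) -/
open Matrix

attribute [local instance 100] LieRing.ofAssociativeRing

/-- The standard basis matrix `E i j`. -/
noncomputable def E {n : ℕ} (i j : Fin n) : Matrix (Fin n) (Fin n) ℝ :=
  Matrix.single i j 1

/-- `C i j = E i i - E j j`, a diagonal traceless matrix. -/
noncomputable def C {n : ℕ} (i j : Fin n) : Matrix (Fin n) (Fin n) ℝ :=
  E i i - E j j

/-- The special linear Lie algebra `sl(n, ℝ)` of traceless matrices. -/
noncomputable def sl (n : ℕ) : LieSubalgebra ℝ (Matrix (Fin n) (Fin n) ℝ) :=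
  LieAlgebra.SpecialLinear.sl (Fin n) ℝ

/-- A digraph is strongly connected if every vertex is reachable from every vertex. -/
def StronglyConnected {V : Type*} (Adj : V → V → Prop) : Prop :=
  ∀ u v : V, Relation.ReflTransGen Adj u v

/-- Two vertices are weakly connected if one is reachable from the other in the
symmetric closure of the adjacency relation. -/
def WeaklyConnected {V : Type*} (Adj : V → V → Prop) (u v : V) : Prop :=
  Relation.ReflTransGen (fun a b => Adj a b ∨ Adj b a) u v

variable {n : ℕ}

lemma mem_sl' (X : Matrix (Fin n) (Fin n) ℝ) : X ∈ sl n ↔ X.trace = 0 := Iff.rfl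

lemma E_mul (a b c d : Fin n) : E a b * E c d = if b = c then E a d else 0 := by
  split
  · next h => subst h; rw [E, E, E, Matrix.single_mul_single_same, one_mul]
  · next h => exact Matrix.single_mul_single_of_ne (1:ℝ) a b c h 1

lemma brEE {a b d : Fin n} (h : d ≠ a) : ⁅E a b, E b d⁆ = E a d := by
  rw [Ring.lie_def, E_mul, E_mul, if_pos rfl, if_neg h, sub_zero]

lemma brEE0 {a b c d : Fin n} (hbc : b ≠ c) (hda : d ≠ a) : ⁅E a b, E c d⁆ = 0 := by
  rw [Ring.lie_def, E_mul, E_mul, if_neg hbc, if_neg hda, sub_zero]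

lemma brEEC (a b : Fin n) : ⁅E a b, E b a⁆ = E a a - E b b := by
  rw [Ring.lie_def, E_mul, E_mul, if_pos rfl, if_pos rfl]

lemma E_diag (i : Fin n) : E i i = Matrix.diagonal (fun x => if x = i then (1:ℝ) else 0) := by
  ext x y
  simp only [E, Matrix.single, Matrix.diagonal, Matrix.of_apply]
  by_cases hx : x = y
  · subst hx; by_cases h : x = i
    · subst h; simp
    · simp only [if_neg h, and_self, if_neg (fun h' : i = x => h h'.symm), if_true]
  · simp only [if_neg hx]
    rw [if_neg]
    rintro ⟨rfl, rfl⟩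
    exact hx rfl

/-- diagonal vector of `C i j`. -/
def cvec (i j : Fin n) : Fin n → ℝ := fun x => (if x = i then 1 else 0) - (if x = j then 1 else 0)

lemma C_diag (i j : Fin n) : C i j = Matrix.diagonal (cvec i j) := by
  rw [C, E_diag, E_diag]
  ext x y
  by_cases hx : x = y
  · subst hx; simp [Matrix.diagonal, cvec]
  · simp [Matrix.diagonal, hx, cvec]

lemma lie_diagonal_apply (c : Fin n → ℝ) (X : Matrix (Fin n) (Fin n) ℝ) (x y : Fin n) :
    ⁅Matrix.diagonal c, X⁆ x y = (c x - c y) * X x y := by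
  rw [Ring.lie_def, Matrix.sub_apply, Matrix.diagonal_mul, Matrix.mul_diagonal]
  ring

lemma mask_mem (L : LieSubalgebra ℝ (Matrix (Fin n) (Fin n) ℝ)) (c : Fin n → ℝ)
    (hc : Matrix.diagonal c ∈ L) {X : Matrix (Fin n) (Fin n) ℝ} (hX : X ∈ L) (lam : ℝ) :
    (Matrix.of fun x y => if c x - c y = lam then X x y else 0) ∈ L := by
  classical
  set f : ℕ → Matrix (Fin n) (Fin n) ℝ :=
    fun j => (fun Y => ⁅Matrix.diagonal c, Y⁆)^[j] X with hf
  have hfmem : ∀ j, f j ∈ L := by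
    intro j
    induction j with
    | zero => exact hX
    | succ j ih =>
      show (fun Y => ⁅Matrix.diagonal c, Y⁆)^[j+1] X ∈ L
      rw [Function.iterate_succ_apply']
      exact L.lie_mem hc ih
  have hfapp : ∀ j x y, f j x y = (c x - c y) ^ j * X x y := by
    intro j
    induction j with
    | zero => intro x y; simp [hf]
    | succ j ih =>
      intro x y
      show ((fun Y => ⁅Matrix.diagonal c, Y⁆)^[j+1] X) x y = _
      rw [Function.iterate_succ_apply']
      have : ((fun Y => ⁅Matrix.diagonal c, Y⁆)^[j] X) = f j := by rw [hf]
      rw [this, lie_diagonal_apply, ih, pow_succ]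
      ring
  set T : Finset ℝ := Finset.image (fun p : Fin n × Fin n => c p.1 - c p.2) Finset.univ with hT
  by_cases hlam : lam ∈ T
  · set p : Polynomial ℝ := Lagrange.basis T id lam with hp
    have key : (Matrix.of fun x y => if c x - c y = lam then X x y else 0) =
        ∑ j ∈ Finset.range (p.natDegree + 1), p.coeff j • f j := by
      ext x y
      have hmem : c x - c y ∈ T := by
        rw [hT]; exact Finset.mem_image.mpr ⟨(x, y), Finset.mem_univ _, rfl⟩
      have : (∑ j ∈ Finset.range (p.natDegree + 1), p.coeff j • f j) x y
          = ∑ j ∈ Finset.range (p.natDegree + 1), p.coeff j * ((c x - c y) ^ j * X x y) := by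
        rw [Matrix.sum_apply]
        refine Finset.sum_congr rfl fun j _ => ?_
        rw [Matrix.smul_apply, hfapp, smul_eq_mul]
      rw [this]
      have : ∑ j ∈ Finset.range (p.natDegree + 1), p.coeff j * ((c x - c y) ^ j * X x y)
          = p.eval (c x - c y) * X x y := by
        rw [Polynomial.eval_eq_sum_range, Finset.sum_mul]
        refine Finset.sum_congr rfl fun j _ => by ring
      rw [this, Matrix.of_apply]
      by_cases hxy : c x - c y = lam
      · rw [if_pos hxy, hxy]
        have : Polynomial.eval lam p = 1 := by
          have := Lagrange.eval_basis_self (s := T) (v := id) (i := lam)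
            (Set.injOn_id _) hlam
          simpa using this
        rw [this, one_mul]
      · rw [if_neg hxy]
        have : Polynomial.eval (c x - c y) p = 0 := by
          have := Lagrange.eval_basis_of_ne (s := T) (v := id) (i := lam) (j := c x - c y)
            (fun h => hxy h.symm) hmem
          simpa using this
        rw [this, zero_mul]
    rw [key]
    exact sum_mem (fun j _ => L.smul_mem _ (hfmem j))
  · have : (Matrix.of fun x y => if c x - c y = lam then X x y else 0) = 0 := by
      ext x y
      rw [Matrix.of_apply, if_neg, Matrix.zero_apply]
      intro h
      exact hlam (h ▸ Finset.mem_image.mpr ⟨(x, y), Finset.mem_univ _, rfl⟩)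
    rw [this]
    exact L.zero_mem

lemma cvec_one {i j : Fin n} (hij : i ≠ j) (x y : Fin n) :
    cvec i j x - cvec i j y = 1 ↔ ((x = i ∧ y ≠ i ∧ y ≠ j) ∨ (y = j ∧ x ≠ i ∧ x ≠ j)) := by
  unfold cvec
  by_cases hxi : x = i <;> by_cases hxj : x = j <;> by_cases hyi : y = i <;>
    by_cases hyj : y = j <;> simp_all <;> norm_num

lemma double_mask (L : LieSubalgebra ℝ (Matrix (Fin n) (Fin n) ℝ))
    {M : Matrix (Fin n) (Fin n) ℝ} (hM : M ∈ L) {w b z d : Fin n}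
    (hwb : w ≠ b) (hwz : w ≠ z) (hwd : w ≠ d) (hbz : b ≠ z) (hbd : b ≠ d) (hzd : z ≠ d)
    (h1 : Matrix.diagonal (cvec w b) ∈ L) (h2 : Matrix.diagonal (cvec z d) ∈ L) :
    M w z • E w z + M d b • E d b ∈ L := by
  have hM1 := mask_mem L _ h1 hM 1
  have hM2 := mask_mem L _ h2 hM1 (-1)
  have key : (Matrix.of fun x y => if cvec z d x - cvec z d y = -1 then
      (Matrix.of fun x y => if cvec w b x - cvec w b y = 1 then M x y else 0) x y else 0)
      = M w z • E w z + M d b • E d b := by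
    ext x y
    have hiff : (cvec z d x - cvec z d y = -1 ∧ cvec w b x - cvec w b y = 1)
        ↔ ((w = x ∧ z = y) ∨ (d = x ∧ b = y)) := by
      have e2 : cvec z d x - cvec z d y = -1 ↔ cvec z d y - cvec z d x = 1 := by
        constructor <;> intro h <;> linarith
      rw [e2, cvec_one hzd, cvec_one hwb]
      constructor
      · rintro ⟨h2c | h2c, h1c | h1c⟩ <;> simp_all [eq_comm]
      · rintro (⟨hw, hz⟩ | ⟨hd, hb⟩) <;> subst_vars <;>
          refine ⟨?_, ?_⟩ <;> simp_all [eq_comm] <;> tauto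
    have hEwz : E w z x y = if w = x ∧ z = y then (1:ℝ) else 0 := rfl
    have hEdb : E d b x y = if d = x ∧ b = y then (1:ℝ) else 0 := rfl
    rw [Matrix.of_apply, Matrix.add_apply, Matrix.smul_apply, Matrix.smul_apply,
      hEwz, hEdb, smul_eq_mul, smul_eq_mul]
    by_cases hc2 : cvec z d x - cvec z d y = -1
    · rw [if_pos hc2, Matrix.of_apply]
      by_cases hc1 : cvec w b x - cvec w b y = 1
      · rw [if_pos hc1]
        rcases hiff.mp ⟨hc2, hc1⟩ with ⟨hw, hz⟩ | ⟨hd, hb⟩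
        · subst hw; subst hz
          rw [if_pos ⟨rfl, rfl⟩, if_neg (fun h => hwd h.1.symm)]
          ring
        · subst hd; subst hb
          rw [if_neg (fun h => hwd h.1), if_pos ⟨rfl, rfl⟩]
          ring
      · rw [if_neg hc1]
        rw [if_neg (fun h => hc1 (hiff.mpr (Or.inl h)).2),
          if_neg (fun h => hc1 (hiff.mpr (Or.inr h)).2)]
        ring
    · rw [if_neg hc2]
      rw [if_neg (fun h => hc2 (hiff.mpr (Or.inl h)).1),
        if_neg (fun h => hc2 (hiff.mpr (Or.inr h)).1)]
      ring
  rw [key] at hM2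
  exact hM2

lemma E_trace {i j : Fin n} (h : i ≠ j) : (E i j).trace = 0 :=
  Matrix.trace_single_eq_of_ne i j 1 h

lemma E_trace_diag (i : Fin n) : (E i i).trace = 1 := by
  rw [E_diag]
  simp [Matrix.trace, Matrix.diag]

lemma C_trace (i j : Fin n) : (C i j).trace = 0 := by
  rw [C, Matrix.trace_sub, E_trace_diag, E_trace_diag, sub_self]

/-- The Lie subalgebra of matrices vanishing on the `S × Sᶜ` block. -/
def blockSub (S : Set (Fin n)) : LieSubalgebra ℝ (Matrix (Fin n) (Fin n) ℝ) where
  carrier := {X | ∀ s ∈ S, ∀ t ∉ S, X s t = 0}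
  add_mem' := by
    intro X Y hX hY s hs t ht
    rw [Matrix.add_apply, hX s hs t ht, hY s hs t ht, add_zero]
  zero_mem' := by intro s _ t _; rfl
  smul_mem' := by
    intro c X hX s hs t ht
    rw [Matrix.smul_apply, hX s hs t ht, smul_zero]
  lie_mem' := by
    intro X Y hX hY s hs t ht
    rw [Ring.lie_def, Matrix.sub_apply, Matrix.mul_apply, Matrix.mul_apply]
    rw [Finset.sum_eq_zero, Finset.sum_eq_zero, sub_zero]
    · intro k _
      by_cases hk : k ∈ S
      · rw [hX k hk t ht, mul_zero]
      · rw [hY s hs k hk, zero_mul]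
    · intro k _
      by_cases hk : k ∈ S
      · rw [hY k hk t ht, mul_zero]
      · rw [hX s hs k hk, zero_mul]

lemma sl_le_of_allE (L : LieSubalgebra ℝ (Matrix (Fin n) (Fin n) ℝ)) (i₀ : Fin n)
    (hE : ∀ u v : Fin n, u ≠ v → E u v ∈ L) : sl n ≤ L := by
  intro X hX
  have htr : X.trace = 0 := hX
  have hC : ∀ i : Fin n, C i i₀ ∈ L := by
    intro i
    by_cases h : i = i₀
    · subst h
      have : C i i = 0 := by rw [C, sub_self]
      rw [this]; exact L.zero_mem
    · have hmem : ⁅E i i₀, E i₀ i⁆ ∈ L := L.lie_mem (hE _ _ h) (hE _ _ (Ne.symm h))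
      rwa [brEEC] at hmem
  have hbase : X = ∑ i, ∑ j, X i j • E i j := by
    conv_lhs => rw [Matrix.matrix_eq_sum_single X]
    refine Finset.sum_congr rfl fun i _ => Finset.sum_congr rfl fun j _ => ?_
    rw [E, Matrix.smul_single, smul_eq_mul, mul_one]
  have hsplit : ∀ i : Fin n, ∑ j, X i j • E i j
      = (∑ j, if i = j then 0 else X i j • E i j) + X i i • E i i := by
    intro i
    have : ∀ j ∈ Finset.univ, X i j • E i j
        = (if i = j then 0 else X i j • E i j) + (if i = j then X i j • E i j else 0) := by
      intro j _
      split <;> simp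
    rw [Finset.sum_congr rfl this, Finset.sum_add_distrib, Finset.sum_ite_eq]
    simp
  have hdiag : ∑ i, X i i • E i i = ∑ i, X i i • C i i₀ := by
    have : ∑ i, X i i • C i i₀ = ∑ i, X i i • E i i - (∑ i, X i i) • E i₀ i₀ := by
      rw [Finset.sum_smul, ← Finset.sum_sub_distrib]
      refine Finset.sum_congr rfl fun i _ => ?_
      rw [C, smul_sub]
    rw [this]
    have htr' : ∑ i, X i i = 0 := htr
    rw [htr', zero_smul, sub_zero]
  have key : X = (∑ i, ∑ j, if i = j then 0 else X i j • E i j) + ∑ i, X i i • C i i₀ := by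
    rw [← hdiag]
    conv_lhs => rw [hbase]
    rw [Finset.sum_congr rfl (fun i _ => hsplit i), Finset.sum_add_distrib]
  rw [key]
  refine L.add_mem (sum_mem fun i _ => sum_mem fun j _ => ?_) (sum_mem fun i _ => L.smul_mem _ (hC i))
  split
  · exact L.zero_mem
  · next h => exact L.smul_mem _ (hE i j h)

/-- Lie algebra rank condition for the bilinear system with drift on `SL(n)`:
under the stated assumptions on the weakly connected components of the controlled
interaction digraph, the generated Lie algebra equals `sl(n, ℝ)` iff the union of the
drift and controlled interaction digraphs is strongly connected. -/
theorem SLn_accessibility_iff_union_strongly_connected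
    (n m₁ m₂ : ℕ) (hn : 1 ≤ n)
    (A : Matrix (Fin n) (Fin n) ℝ) (hA : A.trace = 0)
    (ijE : Fin m₁ → Fin n × Fin n) (hijE : ∀ k, (ijE k).1 ≠ (ijE k).2)
    (ijC : Fin m₂ → Fin n × Fin n) (hijC : ∀ k, (ijC k).1 ≠ (ijC k).2)
    (contrAdj driftAdj : Fin n → Fin n → Prop)
    (hcontr : contrAdj = fun a b => ∃ k, ijE k = (a, b))
    (hdrift : driftAdj = fun a b => a ≠ b ∧ A a b ≠ 0)
    (ha : ∀ u v : Fin n, WeaklyConnected contrAdj u v → Relation.ReflTransGen contrAdj u v)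
    (hb : ∀ v : Fin n, 2 ≤ {u : Fin n | WeaklyConnected contrAdj v u}.ncard)
    (hc : ∃ v : Fin n, 3 ≤ {u : Fin n | WeaklyConnected contrAdj v u}.ncard) :
    LieSubalgebra.lieSpan ℝ (Matrix (Fin n) (Fin n) ℝ)
        ({A} ∪ (Set.range fun k => E (ijE k).1 (ijE k).2) ∪
          (Set.range fun k => C (ijC k).1 (ijC k).2)) = sl n ↔
      StronglyConnected (fun a b : Fin n => driftAdj a b ∨ contrAdj a b) := by
  subst hcontr hdrift
  set gens : Set (Matrix (Fin n) (Fin n) ℝ) :=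
    ({A} ∪ (Set.range fun k => E (ijE k).1 (ijE k).2) ∪
      (Set.range fun k => C (ijC k).1 (ijC k).2)) with hgens
  set L := LieSubalgebra.lieSpan ℝ (Matrix (Fin n) (Fin n) ℝ) gens with hL
  -- notation for the union digraph
  set arc : Fin n → Fin n → Prop :=
    fun a b => (a ≠ b ∧ A a b ≠ 0) ∨ (∃ k, ijE k = (a, b)) with harcdef
  -- basic membership facts
  have hAmem : A ∈ L := LieSubalgebra.subset_lieSpan (Or.inl (Or.inl rfl))
  have hKcontr : ∀ a b : Fin n, (∃ k, ijE k = (a, b)) → E a b ∈ L := by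
    rintro a b ⟨k, hk⟩
    refine LieSubalgebra.subset_lieSpan (Or.inl (Or.inr ⟨k, ?_⟩))
    show E (ijE k).1 (ijE k).2 = E a b
    rw [hk]
  have harc_ne : ∀ a b : Fin n, arc a b → a ≠ b := by
    rintro a b (h | ⟨k, hk⟩)
    · exact h.1
    · have := hijE k
      rw [hk] at this
      exact this
  have hKtrans : ∀ u v w : Fin n, E u v ∈ L → E v w ∈ L → w ≠ u → E u w ∈ L := by
    intro u v w h1 h2 hne
    have := L.lie_mem h1 h2
    rwa [brEE hne] at this
  -- the equivalence relation `sim`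
  set sim : Fin n → Fin n → Prop :=
    fun u v => u = v ∨ (E u v ∈ L ∧ E v u ∈ L) with hsimdef
  have hsim_refl : ∀ u, sim u u := fun u => Or.inl rfl
  have hsim_symm : ∀ u v, sim u v → sim v u := by
    rintro u v (rfl | ⟨h1, h2⟩)
    · exact Or.inl rfl
    · exact Or.inr ⟨h2, h1⟩
  have hKofsim : ∀ u v, sim u v → u ≠ v → E u v ∈ L := by
    rintro u v (rfl | ⟨h1, _⟩) hne
    · exact absurd rfl hne
    · exact h1
  have hsim_trans : ∀ u v w, sim u v → sim v w → sim u w := by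
    rintro u v w (rfl | ⟨h1, h2⟩) hvw
    · exact hvw
    · rcases hvw with rfl | ⟨h3, h4⟩
      · exact Or.inr ⟨h1, h2⟩
      · by_cases huw : u = w
        · exact Or.inl huw
        · exact Or.inr ⟨hKtrans u v w h1 h3 (Ne.symm huw),
            hKtrans w v u h4 h2 huw⟩
  have hCsim : ∀ u v : Fin n, E u v ∈ L → E v u ∈ L →
      Matrix.diagonal (cvec u v) ∈ L := by
    intro u v h1 h2
    have hmem := L.lie_mem h1 h2
    rw [brEEC] at hmem
    have : C u v ∈ L := hmem
    rwa [C_diag] at this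
  -- paths in the control graph give `sim`
  have hpath : ∀ u v : Fin n, Relation.ReflTransGen (fun a b => ∃ k, ijE k = (a, b)) u v →
      u = v ∨ E u v ∈ L := by
    intro u v h
    induction h with
    | refl => exact Or.inl rfl
    | @tail w v hw hwv ih =>
      by_cases huv : u = v
      · exact Or.inl huv
      · refine Or.inr ?_
        rcases ih with rfl | hK
        · exact hKcontr _ _ hwv
        · exact hKtrans u w v hK (hKcontr _ _ hwv) (Ne.symm huv)
  have hsimweak : ∀ u v : Fin n, WeaklyConnected (fun a b => ∃ k, ijE k = (a, b)) u v →
      sim u v := by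
    intro u v h
    have hsymmrel : Symmetric (fun a b : Fin n =>
        (∃ k, ijE k = (a, b)) ∨ (∃ k, ijE k = (b, a))) := fun a b hh => Or.symm hh
    have h2 : WeaklyConnected (fun a b => ∃ k, ijE k = (a, b)) v u :=
      by haveI : Std.Symm (fun a b : Fin n =>
          (∃ k, ijE k = (a, b)) ∨ (∃ k, ijE k = (b, a))) := ⟨hsymmrel⟩
         exact Std.Symm.symm (r := Relation.ReflTransGen (fun a b : Fin n =>
          (∃ k, ijE k = (a, b)) ∨ (∃ k, ijE k = (b, a)))) _ _ h
    have r1 := hpath u v (ha u v h)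
    have r2 := hpath v u (ha v u h2)
    rcases r1 with rfl | hK1
    · exact Or.inl rfl
    · rcases r2 with rfl | hK2
      · exact Or.inl rfl
      · exact Or.inr ⟨hK1, hK2⟩
  have htwo : ∀ v : Fin n, ∃ b, sim v b ∧ b ≠ v := by
    intro v
    obtain ⟨b, hbmem, hbne⟩ := Set.exists_ne_of_one_lt_ncard
      (lt_of_lt_of_le one_lt_two (hb v)) v
    exact ⟨b, hsimweak v b hbmem, hbne⟩
  constructor
  · -- necessity
    intro hEq u v
    by_contra hreach
    set S : Set (Fin n) := {w | Relation.ReflTransGen arc u w} with hS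
    have huS : u ∈ S := Relation.ReflTransGen.refl
    have hvS : v ∉ S := hreach
    have hLB : L ≤ blockSub S := by
      rw [hL]
      rw [LieSubalgebra.lieSpan_le]
      rintro X (( rfl | ⟨k, rfl⟩ ) | ⟨k, rfl⟩)
      · -- A
        intro s hs t ht
        by_contra hAst
        have hst : s ≠ t := fun h => ht (h ▸ hs)
        exact ht (Relation.ReflTransGen.tail hs (Or.inl ⟨hst, hAst⟩))
      · -- E generator
        intro s hs t ht
        by_contra hval
        have : (ijE k).1 = s ∧ (ijE k).2 = t := by
          by_contra hcond
          exact hval (if_neg hcond)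
        obtain ⟨h1, h2⟩ := this
        refine ht (Relation.ReflTransGen.tail hs (Or.inr ⟨k, ?_⟩))
        rw [← h1, ← h2]
      · -- C generator
        intro s hs t ht
        have hst : s ≠ t := fun h => ht (h ▸ hs)
        show C (ijC k).1 (ijC k).2 s t = 0
        rw [C, Matrix.sub_apply]
        have e1 : E (ijC k).1 (ijC k).1 s t = 0 := by
          rw [E_diag, Matrix.diagonal_apply_ne _ hst]
        have e2 : E (ijC k).2 (ijC k).2 s t = 0 := by
          rw [E_diag, Matrix.diagonal_apply_ne _ hst]
        rw [e1, e2, sub_zero]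
    have huv : u ≠ v := fun h => hvS (h ▸ huS)
    have hEuv : E u v ∈ L := by
      rw [hEq]
      exact E_trace huv
    have := hLB hEuv u huS v hvS
    rw [E] at this
    simp [Matrix.single] at this
  · -- sufficiency
    intro hSC
    have hn3 : 3 ≤ n := by
      obtain ⟨v, hv⟩ := hc
      calc 3 ≤ {u : Fin n | WeaklyConnected (fun a b => ∃ k, ijE k = (a, b)) v u}.ncard := hv
        _ ≤ (Set.univ : Set (Fin n)).ncard := Set.ncard_le_ncard (Set.subset_univ _) (Set.toFinite _)
        _ = n := by rw [Set.ncard_univ]; simp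
    refine le_antisymm ?_ ?_
    · rw [hL, LieSubalgebra.lieSpan_le]
      rintro X (( rfl | ⟨k, rfl⟩ ) | ⟨k, rfl⟩)
      · exact hA
      · exact E_trace (hijE k)
      · exact C_trace _ _
    · -- sl ≤ L : the main direction
      have hAllE : ∀ u v : Fin n, u ≠ v → E u v ∈ L := by
        by_contra hnot
        push_neg at hnot
        obtain ⟨u₀, v₀, hne₀, hEnot⟩ := hnot
        obtain ⟨r, hr3⟩ := hc
        have hR3 : 3 ≤ {u : Fin n | sim r u}.ncard := by
          refine le_trans hr3 (Set.ncard_le_ncard ?_ (Set.toFinite _))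
          intro w hw
          exact hsimweak r w hw
        have hpairR : ∀ a : Fin n, ∃ p q : Fin n,
            sim r p ∧ sim r q ∧ p ≠ a ∧ q ≠ a ∧ p ≠ q := by
          intro a
          set R : Set (Fin n) := {u | sim r u} with hRdef
          have hsub : R ⊆ insert a (R \ {a}) := by
            intro w hw
            by_cases hwa : w = a
            · exact hwa ▸ Set.mem_insert _ _
            · exact Set.mem_insert_of_mem _ ⟨hw, hwa⟩
          have hcard : 3 ≤ (R \ {a}).ncard + 1 := by
            calc 3 ≤ R.ncard := hR3
              _ ≤ (insert a (R \ {a})).ncard := Set.ncard_le_ncard hsub (Set.toFinite _)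
              _ ≤ (R \ {a}).ncard + 1 := Set.ncard_insert_le _ _
          have h2 : 1 < (R \ {a}).ncard := by omega
          obtain ⟨p, hp, -⟩ := Set.exists_ne_of_one_lt_ncard h2 a
          obtain ⟨q, hq, hqp⟩ := Set.exists_ne_of_one_lt_ncard h2 p
          exact ⟨p, q, hp.1, hq.1, hp.2, hq.2, hqp.symm⟩
        -- there is a vertex outside the class of r
        have hex : ∃ v, ¬ sim r v := by
          by_contra hall
          push_neg at hall
          exact hEnot (hKofsim u₀ v₀
            (hsim_trans _ _ _ (hsim_symm _ _ (hall u₀)) (hall v₀)) hne₀)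
        obtain ⟨v₁, hv₁⟩ := hex
        -- first crossing out of the class of r
        have hFC : ∀ a b : Fin n, Relation.ReflTransGen arc a b → sim r a → ¬ sim r b →
            ∃ x y, sim r x ∧ ¬ sim r y ∧ arc x y := by
          intro a b h
          induction h with
          | refl => intro h1 h2; exact absurd h1 h2
          | @tail w b hw hwb ih =>
            intro h1 h2
            by_cases hmid : sim r w
            · exact ⟨w, b, hmid, h2, hwb⟩
            · exact ih h1 hmid
        obtain ⟨x, y, hx, hy, hxy⟩ := hFC r v₁ (hSC r v₁) (hsim_refl r) hv₁
        have hxyne : x ≠ y := harc_ne _ _ hxy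
        -- step 1 : E x y ∈ L
        have hKxy : E x y ∈ L := by
          rcases hxy with ⟨hne, hAxy⟩ | hcontrarc
          · -- drift arc : extraction
            obtain ⟨b, b', hb1, hb2, hbx, hb'x, hbb'⟩ := hpairR x
            obtain ⟨dd, hd1, hd2⟩ := htwo y
            have hsimxb : sim x b := hsim_trans _ _ _ (hsim_symm _ _ hx) hb1
            have hsimxb' : sim x b' := hsim_trans _ _ _ (hsim_symm _ _ hx) hb2
            have hxd : x ≠ dd := by
              intro h
              exact hy (hsim_trans _ _ _ hx (hsim_symm _ _ (by rw [← h] at hd1; exact hd1)))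
            have hby : b ≠ y := by
              intro h; exact hy (by rw [← h]; exact hb1)
            have hbd : b ≠ dd := by
              intro h
              refine hy (hsim_trans _ _ _ hb1 (hsim_symm _ _ ?_))
              rw [h]; exact hd1
            have h1 : Matrix.diagonal (cvec x b) ∈ L :=
              hCsim x b (hKofsim x b hsimxb hbx.symm) (hKofsim b x (hsim_symm _ _ hsimxb) hbx)
            have h2 : Matrix.diagonal (cvec y dd) ∈ L :=
              hCsim y dd (hKofsim y dd hd1 hd2.symm) (hKofsim dd y (hsim_symm _ _ hd1) hd2)
            have hDM := double_mask L hAmem hbx.symm hne hxd hby hbd hd2.symm h1 h2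
            have hEb'x : E b' x ∈ L := hKofsim b' x (hsim_symm _ _ hsimxb') hb'x
            have hZ := L.lie_mem hEb'x hDM
            have hyb' : y ≠ b' := by
              intro h; exact hy (by rw [h]; exact hb2)
            rw [lie_add, lie_smul, lie_smul, brEE hyb', brEE0 hxd hbb', smul_zero,
              add_zero] at hZ
            have hEb'y : E b' y ∈ L := by
              have := L.smul_mem (A x y)⁻¹ hZ
              rwa [inv_smul_smul₀ hAxy] at this
            exact hKtrans x b' y (hKofsim x b' hsimxb' hb'x.symm) hEb'y (Ne.symm hne)
          · exact hKcontr _ _ hcontrarc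
        have hnsimxy : ¬ sim x y := fun h => hy (hsim_trans _ _ _ hx h)
        have main : ∀ t : Fin n, Relation.ReflTransGen arc y t → (E x t ∈ L ∧ ¬ sim x t) := by
          intro t ht
          induction ht with
          | refl => exact ⟨hKxy, hnsimxy⟩
          | @tail w t hyw hwt ih =>
            obtain ⟨hKxw, hnsimxw⟩ := ih
            have hwtne : w ≠ t := harc_ne _ _ hwt
            have hxw_ne : x ≠ w := by
              intro h; exact hnsimxw (by rw [← h]; exact hsim_refl x)
            by_cases hsimxt : sim x t
            · exfalso
              have hsimrt : sim r t := hsim_trans _ _ _ hx hsimxt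
              have hKwx : E w x ∈ L := by
                by_cases hsimwt : sim w t
                · have hKwt : E w t ∈ L := hKofsim _ _ hsimwt hwtne
                  by_cases htx : t = x
                  · rw [← htx]; exact hKwt
                  · exact hKtrans w t x hKwt (hKofsim t x (hsim_symm _ _ hsimxt) htx) hxw_ne
                · rcases hwt with ⟨hne, hAwt⟩ | hcontrarc
                  · obtain ⟨dd, dd', hd1, hd2, hddt, hdd't, hdd'⟩ := hpairR t
                    obtain ⟨bw, hbw1, hbw2⟩ := htwo w
                    have hwd : w ≠ dd := by
                      intro h
                      refine hnsimxw (hsim_trans _ _ _ (hsim_symm _ _ hx) ?_)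
                      rw [h]; exact hd1
                    have hbz : bw ≠ t := by
                      intro h; exact hsimwt (by rw [← h]; exact hbw1)
                    have hbd : bw ≠ dd := by
                      intro h
                      refine hnsimxw (hsim_trans _ _ _ (hsim_symm _ _ hx) (hsim_symm _ _
                        (hsim_trans _ _ _ hbw1 (hsim_symm _ _ ?_))))
                      rw [h]; exact hd1
                    have hsimtdd : sim t dd := hsim_trans _ _ _ (hsim_symm _ _ hsimrt) hd1
                    have hsimtdd' : sim t dd' := hsim_trans _ _ _ (hsim_symm _ _ hsimrt) hd2
                    have h1 : Matrix.diagonal (cvec w bw) ∈ L :=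
                      hCsim w bw (hKofsim w bw hbw1 hbw2.symm) (hKofsim bw w (hsim_symm _ _ hbw1) hbw2)
                    have h2 : Matrix.diagonal (cvec t dd) ∈ L :=
                      hCsim t dd (hKofsim t dd hsimtdd hddt.symm)
                        (hKofsim dd t (hsim_symm _ _ hsimtdd) hddt)
                    have hDM := double_mask L hAmem hbw2.symm hwtne hwd hbz hbd hddt.symm h1 h2
                    have hEtdd' : E t dd' ∈ L := hKofsim t dd' hsimtdd' hdd't.symm
                    have hZ := L.lie_mem hDM hEtdd'
                    have hdd'w : dd' ≠ w := by
                      intro h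
                      refine hnsimxw (hsim_trans _ _ _ (hsim_symm _ _ hx) ?_)
                      rw [← h]; exact hd2
                    rw [add_lie, smul_lie, smul_lie, brEE hdd'w, brEE0 hbz (Ne.symm hdd'),
                      smul_zero, add_zero] at hZ
                    have hEwdd' : E w dd' ∈ L := by
                      have := L.smul_mem (A w t)⁻¹ hZ
                      rwa [inv_smul_smul₀ hAwt] at this
                    by_cases hdx : dd' = x
                    · rw [← hdx]; exact hEwdd'
                    · exact hKtrans w dd' x hEwdd'
                        (hKofsim dd' x (hsim_trans _ _ _ (hsim_symm _ _ hd2) hx) hdx) hxw_ne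
                  · have hKwt : E w t ∈ L := hKcontr _ _ hcontrarc
                    by_cases htx : t = x
                    · rw [← htx]; exact hKwt
                    · exact hKtrans w t x hKwt (hKofsim t x (hsim_symm _ _ hsimxt) htx) hxw_ne
              exact hnsimxw (Or.inr ⟨hKxw, hKwx⟩)
            · refine ⟨?_, hsimxt⟩
              have htxne : t ≠ x := by
                intro h; exact hsimxt (by rw [h]; exact hsim_refl x)
              by_cases hsimwt : sim w t
              · exact hKtrans x w t hKxw (hKofsim w t hsimwt hwtne) htxne
              · rcases hwt with ⟨hne, hAwt⟩ | hcontrarc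
                · obtain ⟨bw, hbw1, hbw2⟩ := htwo w
                  obtain ⟨dt, hdt1, hdt2⟩ := htwo t
                  have hwd : w ≠ dt := by
                    intro h
                    exact hsimwt (hsim_symm _ _ (by rw [← h] at hdt1; exact hdt1))
                  have hbz : bw ≠ t := by
                    intro h; exact hsimwt (by rw [← h]; exact hbw1)
                  have hbd : bw ≠ dt := by
                    intro h
                    refine hsimwt (hsim_trans _ _ _ hbw1 (hsim_symm _ _ ?_))
                    rw [h]; exact hdt1
                  have h1 : Matrix.diagonal (cvec w bw) ∈ L :=
                    hCsim w bw (hKofsim w bw hbw1 hbw2.symm) (hKofsim bw w (hsim_symm _ _ hbw1) hbw2)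
                  have h2 : Matrix.diagonal (cvec t dt) ∈ L :=
                    hCsim t dt (hKofsim t dt hdt1 hdt2.symm) (hKofsim dt t (hsim_symm _ _ hdt1) hdt2)
                  have hDM := double_mask L hAmem hbw2.symm hwtne hwd hbz hbd hdt2.symm h1 h2
                  have hZ := L.lie_mem hKxw hDM
                  have hbwx : bw ≠ x := by
                    intro h
                    exact hnsimxw (hsim_symm _ _ (by rw [← h]; exact hbw1))
                  rw [lie_add, lie_smul, lie_smul, brEE htxne, brEE0 hwd hbwx, smul_zero,
                    add_zero] at hZ
                  have := L.smul_mem (A w t)⁻¹ hZ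
                  rwa [inv_smul_smul₀ hAwt] at this
                · exact hKtrans x w t hKxw (hKcontr _ _ hcontrarc) htxne
        exact (main x (hSC y x)).2 (hsim_refl x)
      obtain ⟨i₀, hi₀⟩ : ∃ i₀ : Fin n, True := ⟨⟨0, by omega⟩, trivial⟩
      exact sl_le_of_allE L i₀ hAllE
end

section
/- Let n ≥ 1, let A ∈ Matrix (Fin n) (Fin n) ℝ, and let (i_1,j_1),…,(i_m,j_m) be pairs in Fin n (self-loops allowed). Let G*_contr be the digraph on Fin n with arc set {(i_1,j_1),…,(i_m,j_m)}, and let G*_drift be the digraph with an arc (i,j) exactly when A i j ≠ 0. Suppose: (a) within each weakly connected component of G*_contr every vertex is reachable from every other by a directed path in G*_contr; (b) every weakly connected component of G*_contr contains at least two vertices; (c) the union digraph G*_drift ∪ G*_contr is strongly connected; and (d) G*_contr has at least one self-loop (some i_k = j_k). Then the Lie subalgebra of Matrix (Fin n) (Fin n) ℝ generated by {A} ∪ {E i_1 j_1, …, E i_m j_m} equals ⊤ (all of Matrix (Fin n) (Fin n) ℝ). (This is the Lie algebra rank condition ensuring accessibility of the bilinear system with drift A on GL⁺(n).) -/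
open Matrix

attribute [local instance 100] LieRing.ofAssociativeRing

lemma E_mul_E {n : ℕ} (a b c d : Fin n) : E a b * E c d = if b = c then E a d else 0 := by
  split
  · subst ‹b = c›
    have := Matrix.single_mul_single_same (α := ℝ) 1 a b d 1
    simp [E]
  · exact Matrix.single_mul_single_of_ne 1 a b c ‹b ≠ c› 1

lemma lie_E_E {n : ℕ} (a b c d : Fin n) :
    ⁅E a b, E c d⁆ = (if b = c then E a d else 0) - (if d = a then E c b else 0) := by
  rw [Ring.lie_def, E_mul_E, E_mul_E]

lemma lie_E_E_mid {n : ℕ} {a b c : Fin n} (h : c ≠ a) : ⁅E a b, E b c⁆ = E a c := by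
  rw [lie_E_E, if_pos rfl, if_neg h, sub_zero]

lemma lie_E_E_loop {n : ℕ} (a b : Fin n) : ⁅E a b, E b a⁆ = E a a - E b b := by
  rw [lie_E_E, if_pos rfl, if_pos rfl]

lemma E_A_E {n : ℕ} (A : Matrix (Fin n) (Fin n) ℝ) (a b c d : Fin n) :
    E a b * A * E c d = A b c • E a d := by
  ext x y
  simp only [E, Matrix.mul_apply, Matrix.single, Matrix.smul_apply, Matrix.of_apply,
    ite_and, mul_ite, ite_mul, one_mul, mul_one, zero_mul, mul_zero, smul_ite, smul_eq_mul,
    Finset.sum_ite_eq, Finset.sum_ite_eq', Finset.mem_univ, if_true, smul_zero]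
  by_cases h1 : a = x <;> by_cases h2 : d = y <;> simp [h1, h2]

lemma dagger {n : ℕ} (A : Matrix (Fin n) (Fin n) ℝ) {a b c d : Fin n}
    (hbc : b ≠ c) (hda : d ≠ a) :
    ⁅⁅E a b, A⁆, E c d⁆ = A b c • E a d + A d a • E c b := by
  have h1 : E a b * E c d = 0 := by simp [E_mul_E, hbc]
  have h2 : E c d * E a b = 0 := by simp [E_mul_E, hda]
  rw [Ring.lie_def, Ring.lie_def, sub_mul, mul_sub, mul_assoc A, h1, mul_zero,
    ← mul_assoc (E c d), h2, zero_mul, sub_zero, E_A_E, ← mul_assoc, E_A_E]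
  abel

/-- Sufficient Lie algebra rank condition for accessibility on `GL⁺(n)`:
if each weakly connected component of the controlled interaction digraph is strongly
connected with at least two nodes, the union digraph is strongly connected and the
controlled digraph has a self-loop, then the generated Lie algebra is all of
`gl(n, ℝ)`. -/
theorem GLn_accessibility_sufficient
    (n m : ℕ) (hn : 1 ≤ n)
    (A : Matrix (Fin n) (Fin n) ℝ)
    (ij : Fin m → Fin n × Fin n)
    (contrAdj driftAdj : Fin n → Fin n → Prop)
    (hcontr : contrAdj = fun a b => ∃ k, ij k = (a, b))
    (hdrift : driftAdj = fun a b => A a b ≠ 0)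
    (ha : ∀ u v : Fin n, WeaklyConnected contrAdj u v → Relation.ReflTransGen contrAdj u v)
    (hb : ∀ v : Fin n, 2 ≤ {u : Fin n | WeaklyConnected contrAdj v u}.ncard)
    (hcon : StronglyConnected (fun a b : Fin n => driftAdj a b ∨ contrAdj a b))
    (hloop : ∃ k, (ij k).1 = (ij k).2) :
    LieSubalgebra.lieSpan ℝ (Matrix (Fin n) (Fin n) ℝ)
        ({A} ∪ Set.range fun k => E (ij k).1 (ij k).2) = ⊤ := by
  set L := LieSubalgebra.lieSpan ℝ (Matrix (Fin n) (Fin n) ℝ)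
      ({A} ∪ Set.range fun k => E (ij k).1 (ij k).2) with hLdef
  -- basic memberships
  have hA : A ∈ L := LieSubalgebra.subset_lieSpan (Set.mem_union_left _ rfl)
  have harc : ∀ a b : Fin n, contrAdj a b → E a b ∈ L := by
    intro a b hab
    rw [hcontr] at hab
    obtain ⟨k, hk⟩ := hab
    have h0 : E (ij k).1 (ij k).2 ∈ L :=
      LieSubalgebra.subset_lieSpan (Set.mem_union_right _ ⟨k, rfl⟩)
    rw [hk] at h0
    exact h0
  -- weak connectivity toolbox
  have wcsymm : ∀ {u v : Fin n}, WeaklyConnected contrAdj u v → WeaklyConnected contrAdj v u :=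
    fun h => by
      haveI : Std.Symm (fun a b => contrAdj a b ∨ contrAdj b a) := ⟨fun _ _ hh => Or.symm hh⟩
      exact (Relation.ReflTransGen.stdSymm (r := fun a b => contrAdj a b ∨ contrAdj b a)).symm _ _ h
  have wctrans : ∀ {u v w : Fin n}, WeaklyConnected contrAdj u v →
      WeaklyConnected contrAdj v w → WeaklyConnected contrAdj u w :=
    fun h1 h2 => Relation.ReflTransGen.trans h1 h2
  have wcrefl : ∀ u : Fin n, WeaklyConnected contrAdj u u := fun _ => Relation.ReflTransGen.refl
  have arcwc : ∀ {u v : Fin n}, contrAdj u v → WeaklyConnected contrAdj u v :=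
    fun h => Relation.ReflTransGen.single (Or.inl h)
  -- scalar extraction
  have hscale : ∀ (c : ℝ) (X : Matrix (Fin n) (Fin n) ℝ), c ≠ 0 → c • X ∈ L → X ∈ L := by
    intro c X hc h
    have := L.smul_mem c⁻¹ h
    rwa [smul_smul, inv_mul_cancel₀ hc, one_smul] at this
  -- directed paths give off-diagonal matrix units
  have hsl : ∀ u w : Fin n, Relation.ReflTransGen contrAdj u w → u ≠ w → E u w ∈ L := by
    intro u w h
    induction h with
    | refl => intro h; exact absurd rfl h
    | @tail x w hux hxw ih =>
      intro huw
      by_cases hxw' : x = w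
      · subst hxw'; exact ih huw
      · by_cases hux' : u = x
        · subst hux'; exact harc _ _ hxw
        · have hbr := L.lie_mem (ih hux') (harc _ _ hxw)
          rwa [lie_E_E_mid (fun h => huw h.symm)] at hbr
  have hslwc : ∀ u w : Fin n, WeaklyConnected contrAdj u w → u ≠ w → E u w ∈ L :=
    fun u w h => hsl u w (ha u w h)
  -- two elements per component
  have htwo : ∀ v : Fin n, ∃ u, WeaklyConnected contrAdj v u ∧ u ≠ v := by
    intro v
    obtain ⟨u, hu, hne⟩ :=
      Set.exists_ne_of_one_lt_ncard (lt_of_lt_of_le one_lt_two (hb v)) v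
    exact ⟨u, hu, hne⟩
  -- the looped vertex i₀
  obtain ⟨k₀, hk₀⟩ := hloop
  set i₀ := (ij k₀).1 with hi₀
  have hEii : E i₀ i₀ ∈ L := by
    have h0 : E (ij k₀).1 (ij k₀).2 ∈ L :=
      LieSubalgebra.subset_lieSpan (Set.mem_union_right _ ⟨k₀, rfl⟩)
    rw [← hk₀] at h0
    exact h0
  -- full gl on the component C₀ of i₀
  have hgl₀ : ∀ u v : Fin n, WeaklyConnected contrAdj i₀ u → WeaklyConnected contrAdj i₀ v →
      E u v ∈ L := by
    intro u v hu hv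
    by_cases huv : u = v
    · subst huv
      by_cases hui : u = i₀
      · subst hui; exact hEii
      · have h1 : E u i₀ ∈ L := hslwc u i₀ (wcsymm hu) hui
        have h2 : E i₀ u ∈ L := hslwc i₀ u hu (fun h => hui h.symm)
        have hbr := L.add_mem (L.lie_mem h1 h2) hEii
        rwa [lie_E_E_loop, sub_add_cancel] at hbr
    · exact hslwc u v (wctrans (wcsymm hu) hv) huv
  -- Row propagation : all E s w for s in C₀
  have row : ∀ w : Fin n, ∀ s, WeaklyConnected contrAdj i₀ s → E s w ∈ L := by
    intro w
    have hpath := hcon i₀ w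
    induction hpath with
    | refl => exact fun s hs => hgl₀ s i₀ hs (wcrefl i₀)
    | @tail x y hpx hxy ih =>
      by_cases hyC : WeaklyConnected contrAdj i₀ y
      · exact fun s hs => hgl₀ s y hs hyC
      by_cases hxy' : x = y
      · subst hxy'; exact ih
      by_cases hwc : WeaklyConnected contrAdj x y
      · intro s hs
        have hbr := L.lie_mem (ih s hs) (hslwc x y hwc hxy')
        rwa [lie_E_E_mid (fun h : y = s => hyC (h ▸ hs))] at hbr
      have hdr : A x y ≠ 0 := by
        rcases hxy with h | h
        · rw [hdrift] at h; exact h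
        · exact absurd (arcwc h) hwc
      obtain ⟨d, hdy, hdne⟩ := htwo y
      have hdC : ¬ WeaklyConnected contrAdj i₀ d := fun h => hyC (wctrans h (wcsymm hdy))
      have hEyd : E y d ∈ L := hslwc y d hdy (fun h => hdne h.symm)
      have hEdy : E d y ∈ L := hslwc d y (wcsymm hdy) hdne
      have step1 : ∀ a' : Fin n, WeaklyConnected contrAdj i₀ a' → a' ≠ x → E a' d ∈ L := by
        intro a' ha' hax
        obtain ⟨a, haC, hane⟩ : ∃ a, WeaklyConnected contrAdj i₀ a ∧ a ≠ a' := by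
          by_cases h : a' = i₀
          · obtain ⟨u, hu, hun⟩ := htwo i₀
            exact ⟨u, hu, by rw [h]; exact hun⟩
          · exact ⟨i₀, wcrefl i₀, fun hh => h hh.symm⟩
        have hZ : (A x y • E a d + A d a • E y x : Matrix (Fin n) (Fin n) ℝ) ∈ L := by
          have hm := L.lie_mem (L.lie_mem (ih a haC) hA) hEyd
          rwa [dagger A hxy' (fun h : d = a => hdC (by rw [h]; exact haC))] at hm
        have key : ⁅(A x y • E a d + A d a • E y x : Matrix (Fin n) (Fin n) ℝ), E a' a⁆
            = -(A x y • E a' d) := by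
          rw [add_lie, smul_lie, smul_lie, lie_E_E, lie_E_E,
            if_neg (fun h : d = a' => hdC (by rw [h]; exact ha')), if_pos rfl,
            if_neg (fun h : x = a' => hax h.symm),
            if_neg (fun h : a = y => hyC (by rw [← h]; exact haC))]
          simp
        have hbr := L.lie_mem hZ (hgl₀ a' a ha' haC)
        rw [key] at hbr
        have := L.neg_mem hbr
        rw [neg_neg] at this
        exact hscale _ _ hdr this
      have step2 : ∀ s : Fin n, WeaklyConnected contrAdj i₀ s → E s d ∈ L := by
        intro s hs
        by_cases hsx : s = x
        · obtain ⟨a', ha', hane⟩ : ∃ a', WeaklyConnected contrAdj i₀ a' ∧ a' ≠ x := by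
            obtain ⟨u, hu, hun⟩ := htwo s
            exact ⟨u, wctrans hs hu, by rw [← hsx]; exact hun⟩
          have hbr := L.lie_mem (hgl₀ s a' hs ha') (step1 a' ha' hane)
          rwa [lie_E_E_mid (fun h : d = s => hdC (by rw [h]; exact hs))] at hbr
        · exact step1 s hs hsx
      intro s hs
      have hbr := L.lie_mem (step2 s hs) hEdy
      rwa [lie_E_E_mid (fun h : y = s => hyC (by rw [h]; exact hs))] at hbr
  -- Column propagation : all E w s for s in C₀
  have col : ∀ w : Fin n, ∀ s, WeaklyConnected contrAdj i₀ s → E w s ∈ L := by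
    intro w
    have hpath := hcon w i₀
    induction hpath using Relation.ReflTransGen.head_induction_on with
    | refl => exact fun s hs => hgl₀ i₀ s (wcrefl i₀) hs
    | @head x y hxy hpath ih =>
      by_cases hxC : WeaklyConnected contrAdj i₀ x
      · exact fun s hs => hgl₀ x s hxC hs
      by_cases hxy' : x = y
      · subst hxy'; exact ih
      by_cases hwc : WeaklyConnected contrAdj x y
      · intro s hs
        have hbr := L.lie_mem (hslwc x y hwc hxy') (ih s hs)
        rwa [lie_E_E_mid (fun h : s = x => hxC (by rw [← h]; exact hs))] at hbr
      have hdr : A x y ≠ 0 := by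
        rcases hxy with h | h
        · rw [hdrift] at h; exact h
        · exact absurd (arcwc h) hwc
      obtain ⟨a, hax, hane⟩ := htwo x
      have haC : ¬ WeaklyConnected contrAdj i₀ a := fun h => hxC (wctrans h (wcsymm hax))
      have hEax : E a x ∈ L := hslwc a x (wcsymm hax) hane
      have hExa : E x a ∈ L := hslwc x a hax (fun h => hane h.symm)
      have step1 : ∀ d' : Fin n, WeaklyConnected contrAdj i₀ d' → d' ≠ y → E a d' ∈ L := by
        intro d' hd' hdy
        obtain ⟨d, hdC, hdne⟩ : ∃ d, WeaklyConnected contrAdj i₀ d ∧ d ≠ d' := by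
          by_cases h : d' = i₀
          · obtain ⟨u, hu, hun⟩ := htwo i₀
            exact ⟨u, hu, by rw [h]; exact hun⟩
          · exact ⟨i₀, wcrefl i₀, fun hh => h hh.symm⟩
        have hZ : (A x y • E a d + A d a • E y x : Matrix (Fin n) (Fin n) ℝ) ∈ L := by
          have hm := L.lie_mem (L.lie_mem hEax hA) (ih d hdC)
          rwa [dagger A hxy' (fun h : d = a => haC (by rw [← h]; exact hdC))] at hm
        have key : ⁅(A x y • E a d + A d a • E y x : Matrix (Fin n) (Fin n) ℝ), E d d'⁆
            = A x y • E a d' := by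
          rw [add_lie, smul_lie, smul_lie, lie_E_E, lie_E_E, if_pos rfl,
            if_neg (fun h : d' = a => haC (by rw [← h]; exact hd')),
            if_neg (fun h : x = d => hxC (by rw [h]; exact hdC)),
            if_neg hdy]
          simp
        have hbr := L.lie_mem hZ (hgl₀ d d' hdC hd')
        rw [key] at hbr
        exact hscale _ _ hdr hbr
      have step2 : ∀ s : Fin n, WeaklyConnected contrAdj i₀ s → E a s ∈ L := by
        intro s hs
        by_cases hsy : s = y
        · obtain ⟨d'', hd'', hne⟩ : ∃ d'', WeaklyConnected contrAdj i₀ d'' ∧ d'' ≠ y := by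
            obtain ⟨u, hu, hun⟩ := htwo s
            exact ⟨u, wctrans hs hu, by rw [← hsy]; exact hun⟩
          have hbr := L.lie_mem (step1 d'' hd'' hne) (hgl₀ d'' s hd'' hs)
          rwa [lie_E_E_mid (fun h : s = a => haC (by rw [← h]; exact hs))] at hbr
        · exact step1 s hs hsy
      intro s hs
      have hbr := L.lie_mem hExa (step2 s hs)
      rwa [lie_E_E_mid (fun h : s = x => hxC (by rw [← h]; exact hs))] at hbr
  -- all matrix units
  have hall : ∀ u v : Fin n, E u v ∈ L := by
    intro u v
    have h1 : E u i₀ ∈ L := col u i₀ (wcrefl i₀)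
    have h2 : E i₀ v ∈ L := row v i₀ (wcrefl i₀)
    have hbr := L.lie_mem h1 h2
    rw [lie_E_E, if_pos rfl] at hbr
    by_cases huv : v = u
    · rw [if_pos huv] at hbr
      have := L.add_mem hbr hEii
      rwa [sub_add_cancel] at this
    · rwa [if_neg huv, sub_zero] at hbr
  -- conclude
  rw [eq_top_iff]
  intro M _
  have hM : M = ∑ i, ∑ j, M i j • E i j := by
    conv_lhs => rw [Matrix.matrix_eq_sum_single M]
    refine Finset.sum_congr rfl fun i _ => Finset.sum_congr rfl fun j _ => ?_
    rw [E, Matrix.smul_single, smul_eq_mul, mul_one]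
  rw [hM]
  exact L.toSubmodule.sum_mem fun i _ =>
    L.toSubmodule.sum_mem fun j _ => L.smul_mem _ (hall i j)
end

section
/- Let n ≥ 1 and let S be a set of matrices of the form E i j with i ≠ j in Fin n (i.e., S ⊆ { E i j : i ≠ j }). If the digraph on Fin n whose arcs are exactly the pairs (i,j) with E i j ∈ S is strongly connected, then the Lie subalgebra of Matrix (Fin n) (Fin n) ℝ generated by S equals sl(n,ℝ), the Lie algebra of traceless matrices. -/
open Matrix

attribute [local instance 100] LieRing.ofAssociativeRing

lemma mem_sl_iff {n : ℕ} (M : Matrix (Fin n) (Fin n) ℝ) :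
    M ∈ sl n ↔ Matrix.trace M = 0 := Iff.rfl

lemma E_bracket {n : ℕ} (i b c : Fin n) (hic : i ≠ c) :
    ⁅E i b, E b c⁆ = E i c := by
  have h0 : single b c (1:ℝ) * single i b 1 = 0 := by
    exact Matrix.single_mul_single_of_ne (h := hic.symm) ..
  simp only [E, Ring.lie_def, single_mul_single_same, one_mul, h0, sub_zero]

lemma E_bracket_diag {n : ℕ} (i z : Fin n) (_h : i ≠ z) :
    ⁅E i z, E z i⁆ = E i i - E z z := by
  simp only [E, Ring.lie_def, single_mul_single_same, one_mul]

/-- If `S` is a set of off-diagonal standard basis matrices `E i j` (`i ≠ j`) whose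
associated digraph is strongly connected, then the Lie algebra generated by `S`
is `sl(n, ℝ)`. -/
theorem lieSpan_eq_sl_of_strongly_connected
    (n : ℕ) (hn : 1 ≤ n) (S : Set (Matrix (Fin n) (Fin n) ℝ))
    (hS : ∀ M ∈ S, ∃ i j : Fin n, i ≠ j ∧ M = E i j)
    (hconn : StronglyConnected (fun a b : Fin n => E a b ∈ S)) :
    LieSubalgebra.lieSpan ℝ (Matrix (Fin n) (Fin n) ℝ) S = sl n := by
  set L := LieSubalgebra.lieSpan ℝ (Matrix (Fin n) (Fin n) ℝ) S with hL
  apply le_antisymm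
  · -- span ≤ sl
    rw [hL, LieSubalgebra.lieSpan_le]
    intro M hM
    obtain ⟨i, j, hij, rfl⟩ := hS M hM
    show E i j ∈ sl n
    rw [mem_sl_iff]
    exact Matrix.trace_single_eq_of_ne (h := hij) ..
  · -- sl ≤ span
    have key : ∀ i j : Fin n, Relation.ReflTransGen (fun a b => E a b ∈ S) i j →
        i ≠ j → E i j ∈ L := by
      intro i j h
      induction h with
      | refl => intro h; exact absurd rfl h
      | @tail b c hib hbc ih =>
        intro hic
        by_cases hb : i = b
        · subst hb; exact LieSubalgebra.subset_lieSpan hbc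
        · have h1 : E i b ∈ L := ih hb
          have h2 : E b c ∈ L := LieSubalgebra.subset_lieSpan hbc
          have := L.lie_mem h1 h2
          rwa [E_bracket i b c hic] at this
    have key' : ∀ i j : Fin n, i ≠ j → E i j ∈ L := fun i j hij =>
      key i j (hconn i j) hij
    set z : Fin n := ⟨0, hn⟩ with hz
    have key2 : ∀ i : Fin n, E i i - E z z ∈ L := by
      intro i
      by_cases h : i = z
      · subst h; simp only [sub_self]; exact L.zero_mem
      · have := L.lie_mem (key' i z h) (key' z i (Ne.symm h))
        rwa [E_bracket_diag i z h] at this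
    intro M hM
    rw [mem_sl_iff] at hM
    have hMsum : M = ∑ i, ∑ j,
        (if i = j then M i i • (E i i - E z z) else M i j • E i j) := by
      have h1 : ∀ i j : Fin n, (if i = j then M i i • (E i i - E z z) else M i j • E i j)
          = M i j • E i j - (if i = j then M i i • E z z else 0) := by
        intro i j
        by_cases h : i = j
        · subst h; simp [smul_sub]
        · simp [h]
      simp_rw [h1, Finset.sum_sub_distrib]
      have h2 : ∀ i : Fin n, (∑ j, if i = j then M i i • E z z else 0) = M i i • E z z := by
        intro i
        simp
      simp_rw [h2]
      have h3 : (∑ i, M i i • E z z) = Matrix.trace M • E z z := by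
        rw [← Finset.sum_smul]; rfl
      rw [h3, hM, zero_smul, sub_zero]
      have h4 : ∀ i j : Fin n, M i j • E i j = single i j (M i j) := by
        intro i j
        rw [E, smul_single, smul_eq_mul, mul_one]
      simp_rw [h4]
      exact matrix_eq_sum_single M
    rw [hMsum]
    refine sum_mem fun i _ => sum_mem fun j _ => ?_
    by_cases h : i = j
    · simp only [h, if_pos]
      exact L.smul_mem _ (key2 j)
    · simp only [h, if_neg, if_false]
      exact L.smul_mem _ (key' i j h)
end

section
/- Let n ≥ 1, let A ∈ Matrix (Fin n) (Fin n) ℝ be skew-symmetric (Aᵀ = -A), and let (i_1,j_1),…,(i_m,j_m) be pairs in Fin n with i_k ≠ j_k. Let G_contr be the simple graph on Fin n with edge set {{i_1,j_1},…,{i_m,j_m}} and G_drift the simple graph with an edge {i,j} (i ≠ j) exactly when A i j ≠ 0. If the union graph G_drift ⊔ G_contr is not connected, then the Lie subalgebra of Matrix (Fin n) (Fin n) ℝ generated by {A} ∪ {B i_1 j_1, …, B i_m j_m} is a proper subset of so(n); equivalently, if this generated Lie subalgebra equals so(n), then G_drift ⊔ G_contr is connected. -/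
open Matrix

attribute [local instance] LieRing.ofAssociativeRing

/-- `B i j = E i j - E j i`, a basis element of `so(n)`. -/
noncomputable def B {n : ℕ} (i j : Fin n) : Matrix (Fin n) (Fin n) ℝ :=
  E i j - E j i

/-- The special orthogonal Lie algebra `so(n)` of skew-symmetric matrices. -/
def so (n : ℕ) : LieSubalgebra ℝ (Matrix (Fin n) (Fin n) ℝ) where
  carrier := {X | Xᵀ = -X}
  add_mem' := by
    intro X Y hX hY
    simp only [Set.mem_setOf_eq] at *
    rw [Matrix.transpose_add, hX, hY, neg_add]
  zero_mem' := by simp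
  smul_mem' := by
    intro c X hX
    simp only [Set.mem_setOf_eq] at *
    rw [Matrix.transpose_smul, hX, smul_neg]
  lie_mem' := by
    intro X Y hX hY
    simp only [Set.mem_setOf_eq] at *
    rw [Ring.lie_def, Matrix.transpose_sub, Matrix.transpose_mul, Matrix.transpose_mul, hX, hY]
    simp [neg_mul_neg, neg_sub]

lemma B_skew {n : ℕ} (i j : Fin n) : (B i j)ᵀ = -(B i j) := by
  ext p q
  simp [B, E, Matrix.single, and_comm]

lemma B_apply {n : ℕ} (i j p q : Fin n) :
    B i j p q = (if i = p ∧ j = q then (1:ℝ) else 0) - (if j = p ∧ i = q then 1 else 0) := by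
  simp [B, E, Matrix.single]

/-- Block upper-triangular matrices w.r.t. a set `S` form a Lie subalgebra. -/
def blockL {n : ℕ} (S : Set (Fin n)) : LieSubalgebra ℝ (Matrix (Fin n) (Fin n) ℝ) where
  carrier := {X | ∀ p q, p ∈ S → q ∉ S → X p q = 0}
  add_mem' := by
    intro X Y hX hY p q hp hq
    simp [Matrix.add_apply, hX p q hp hq, hY p q hp hq]
  zero_mem' := by intro p q hp hq; simp
  smul_mem' := by
    intro c X hX p q hp hq
    simp [Matrix.smul_apply, hX p q hp hq]
  lie_mem' := by
    intro X Y hX hY p q hp hq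
    have hmul : ∀ (U V : Matrix (Fin n) (Fin n) ℝ),
        (∀ p q, p ∈ S → q ∉ S → U p q = 0) → (∀ p q, p ∈ S → q ∉ S → V p q = 0) →
        (U * V) p q = 0 := by
      intro U V hU hV
      rw [Matrix.mul_apply]
      apply Finset.sum_eq_zero
      intro k _
      by_cases hk : k ∈ S
      · rw [hV k q hk hq, mul_zero]
      · rw [hU p k hp hk, zero_mul]
    rw [Ring.lie_def, Matrix.sub_apply, hmul X Y hX hY, hmul Y X hY hX, sub_zero]

/-- Necessity of union-graph connectivity for controllability on `SO(n)`: if the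
union of the drift and controlled interaction graphs is not connected, then the
generated Lie algebra is a proper Lie subalgebra of `so(n)`. -/
theorem SOn_not_connected_implies_proper
    (n m : ℕ) (hn : 1 ≤ n) (A : Matrix (Fin n) (Fin n) ℝ) (hA : Aᵀ = -A)
    (ij : Fin m → Fin n × Fin n) (hij : ∀ k, (ij k).1 ≠ (ij k).2)
    (Gcontr Gdrift : SimpleGraph (Fin n))
    (hGc : Gcontr = SimpleGraph.fromRel fun a b => ∃ k, ij k = (a, b))
    (hGd : Gdrift = SimpleGraph.fromRel fun a b => A a b ≠ 0)
    (hconn : ¬ (Gdrift ⊔ Gcontr).Connected) :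
    LieSubalgebra.lieSpan ℝ (Matrix (Fin n) (Fin n) ℝ)
        ({A} ∪ Set.range fun k => B (ij k).1 (ij k).2) < so n := by
  haveI hne : Nonempty (Fin n) := ⟨⟨0, hn⟩⟩
  have hpre : ¬ (Gdrift ⊔ Gcontr).Preconnected := fun h => hconn (SimpleGraph.Connected.mk h)
  simp only [SimpleGraph.Preconnected, not_forall] at hpre
  obtain ⟨u, v, hv⟩ := hpre
  set S : Set (Fin n) := {x | (Gdrift ⊔ Gcontr).Reachable u x} with hSdef
  have huS : u ∈ S := SimpleGraph.Reachable.refl u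
  have hvS : v ∉ S := hv
  have hstep : ∀ p q, p ∈ S → (Gdrift ⊔ Gcontr).Adj p q → q ∈ S :=
    fun p q hp h => hp.trans h.reachable
  -- generators lie in `blockL S`
  have hgenL : ({A} ∪ Set.range fun k => B (ij k).1 (ij k).2) ⊆ (blockL S : Set _) := by
    rintro X (rfl | ⟨k, rfl⟩)
    · intro p q hp hq
      by_contra h
      have hpq : p ≠ q := fun e => hq (e ▸ hp)
      have hadj : (Gdrift ⊔ Gcontr).Adj p q := by
        rw [SimpleGraph.sup_adj]
        left
        rw [hGd, SimpleGraph.fromRel_adj]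
        exact ⟨hpq, Or.inl h⟩
      exact hq (hstep p q hp hadj)
    · intro p q hp hq
      have hpq : p ≠ q := fun e => hq (e ▸ hp)
      show B (ij k).1 (ij k).2 p q = 0
      rw [B_apply]
      have hadjpq : (∃ k', ij k' = (p, q)) ∨ (∃ k', ij k' = (q, p)) → False := by
        rintro h
        have hadj : (Gdrift ⊔ Gcontr).Adj p q := by
          rw [SimpleGraph.sup_adj]
          right
          rw [hGc, SimpleGraph.fromRel_adj]
          exact ⟨hpq, h⟩
        exact hq (hstep p q hp hadj)
      rw [if_neg, if_neg, sub_zero]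
      · rintro ⟨h1, h2⟩
        exact hadjpq (Or.inr ⟨k, Prod.ext h2 h1⟩)
      · rintro ⟨h1, h2⟩
        exact hadjpq (Or.inl ⟨k, Prod.ext h1 h2⟩)
  -- generators lie in `so n`
  have hgenSo : ({A} ∪ Set.range fun k => B (ij k).1 (ij k).2) ⊆ (so n : Set _) := by
    rintro X (rfl | ⟨k, rfl⟩)
    · exact hA
    · exact B_skew _ _
  refine lt_of_le_of_ne (LieSubalgebra.lieSpan_le.mpr hgenSo) ?_
  intro heq
  have hBso : B u v ∈ so n := B_skew u v
  have hBspan : B u v ∈ LieSubalgebra.lieSpan ℝ (Matrix (Fin n) (Fin n) ℝ)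
      ({A} ∪ Set.range fun k => B (ij k).1 (ij k).2) := heq ▸ hBso
  have hBL : B u v ∈ blockL S := LieSubalgebra.lieSpan_le.mpr hgenL hBspan
  have : B u v u v = 0 := hBL u v huS hvS
  rw [B_apply] at this
  have huv : u ≠ v := fun e => hvS (e ▸ huS)
  rw [if_pos ⟨rfl, rfl⟩, if_neg (fun h => huv h.2)] at this
  norm_num at this
end
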